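/- Consider the linear system ξ_{k+1} = A ξ_k + Σ_{i=1}^{N} Bⁱ ωⁱ_k with disturbances satisfying (ωⁱ_k)ᵀ Wᵢ ωⁱ_k ≤ 1 for positive definite Wᵢ. Suppose there exist a ∈ (0,1), constants a₁,…,a_N ∈ (0,1) with a₁ + ⋯ + a_N ≥ a, and a positive definite matrix P such that the block matrix [[aP, AᵀP, 0],[PA, P, PB],[0, BᵀP, W_a]] is positive semidefinite, where B = [B¹ … B^N] and W_a = diag((1−a₁)W₁,…,(1−a_N)W_N). Then every trajectory satisfies ξ_kᵀ P ξ_k ≤ a^{k−1} ξ₁ᵀ P ξ₁ + (N − a)(1 − a^{k−1})/(1 − a) for all k ≥ 1; in particular the reachable set at time k is contained in the ellipsoid {ξ : ξᵀ P ξ ≤ α_k} with α_k = a^{k−1} ξ₁ᵀ P ξ₁ + (N − a)(1 − a^{k−1})/(1 − a). -/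

import Mathlib

open Matrix

/-- Ellipsoidal bound on reachable sets of an LTI system driven by peak-bounded
disturbances, certified by the block LMI. -/
theorem stmt_4 {n N : ℕ} {p : Fin N → ℕ}
    (A : Matrix (Fin n) (Fin n) ℝ)
    (B : (i : Fin N) → Matrix (Fin n) (Fin (p i)) ℝ)
    (W : (i : Fin N) → Matrix (Fin (p i)) (Fin (p i)) ℝ)
    (hW : ∀ i, (W i).PosDef)
    (ξ : ℕ → (Fin n → ℝ)) (ω : (k : ℕ) → (i : Fin N) → (Fin (p i) → ℝ))
    (hdyn : ∀ k, ξ (k+1) = A *ᵥ ξ k + ∑ i, B i *ᵥ ω k i)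
    (hω : ∀ k i, ω k i ⬝ᵥ (W i *ᵥ ω k i) ≤ 1)
    (a : ℝ) (ha : a ∈ Set.Ioo (0:ℝ) 1)
    (aC : Fin N → ℝ) (haC : ∀ i, aC i ∈ Set.Ioo (0:ℝ) 1) (hsum : a ≤ ∑ i, aC i)
    (P : Matrix (Fin n) (Fin n) ℝ) (hP : P.PosDef)
    (Bc : Matrix (Fin n) ((i : Fin N) × Fin (p i)) ℝ)
    (hBc : ∀ (r : Fin n) (c : (i : Fin N) × Fin (p i)), Bc r c = B c.1 r c.2)
    (Wa : Matrix ((i : Fin N) × Fin (p i)) ((i : Fin N) × Fin (p i)) ℝ)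
    (hWa : ∀ c c' : (i : Fin N) × Fin (p i),
      Wa c c' = if h : c.1 = c'.1 then
        (1 - aC c.1) * W c.1 c.2 (Fin.cast (congrArg p h).symm c'.2) else 0)
    (hLMI : (Matrix.fromBlocks
        (Matrix.fromBlocks (a • P) (Aᵀ * P) (P * A) P)
        (Matrix.of fun (i : Fin n ⊕ Fin n) (j : (i : Fin N) × Fin (p i)) =>
          Sum.elim (fun _ => (0:ℝ)) (fun i' => (P * Bc) i' j) i)
        (Matrix.of fun (i : (i : Fin N) × Fin (p i)) (j : Fin n ⊕ Fin n) =>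
          Sum.elim (fun _ => (0:ℝ)) (fun j' => (Bcᵀ * P) i j') j)
        Wa).PosSemidef) :
    ∀ k, 1 ≤ k →
      ξ k ⬝ᵥ (P *ᵥ ξ k) ≤ a ^ (k - 1) * (ξ 1 ⬝ᵥ (P *ᵥ ξ 1))
        + ((N : ℝ) - a) * (1 - a ^ (k - 1)) / (1 - a) := by
  obtain ⟨ha0, ha1⟩ := ha
  have hPT : Pᵀ = P := by have := hP.1; simpa [Matrix.IsHermitian] using this
  -- the combined disturbance vector
  set σ : ℕ → ((i : Fin N) × Fin (p i)) → ℝ := fun k c => ω k c.1 c.2 with hσ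
  -- Bc applied to combined disturbance
  have hBcσ : ∀ k, Bc *ᵥ σ k = ∑ i, B i *ᵥ ω k i := by
    intro k
    funext r
    simp only [Matrix.mulVec, dotProduct, Finset.sum_apply]
    rw [← Finset.univ_sigma_univ, Finset.sum_sigma]
    refine Finset.sum_congr rfl fun i _ => ?_
    simp [hBc, Matrix.mulVec, dotProduct, hσ]
  -- quadratic form of Wa on the combined disturbance
  have hWaσ : ∀ k, σ k ⬝ᵥ (Wa *ᵥ σ k) = ∑ i, (1 - aC i) * (ω k i ⬝ᵥ (W i *ᵥ ω k i)) := by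
    intro k
    have hmv : ∀ (c : (i : Fin N) × Fin (p i)),
        (Wa *ᵥ σ k) c = (1 - aC c.1) * ((W c.1 *ᵥ ω k c.1) c.2) := by
      intro c
      obtain ⟨i, j⟩ := c
      simp only [Matrix.mulVec, dotProduct]
      rw [← Finset.univ_sigma_univ, Finset.sum_sigma]
      rw [Finset.sum_eq_single i]
      · simp only [hWa, dite_eq_ite]
        simp only [hσ]
        rw [Finset.mul_sum]
        refine Finset.sum_congr rfl fun j' _ => ?_
        simp [mul_assoc]
      · intro i' _ hne
        apply Finset.sum_eq_zero
        intro j' _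
        rw [hWa]
        simp [hne.symm]
      · simp
    simp only [dotProduct]
    rw [← Finset.univ_sigma_univ, Finset.sum_sigma]
    refine Finset.sum_congr rfl fun i _ => ?_
    simp only [hmv]
    simp only [hσ]
    simp only [dotProduct, Finset.mul_sum]
    refine Finset.sum_congr rfl fun j _ => ?_
    ring
  -- the key dissipation inequality from the LMI
  have hkey : ∀ (x : Fin n → ℝ) (wv : ((i : Fin N) × Fin (p i)) → ℝ),
      (A *ᵥ x + Bc *ᵥ wv) ⬝ᵥ (P *ᵥ (A *ᵥ x + Bc *ᵥ wv))
        ≤ a * (x ⬝ᵥ (P *ᵥ x)) + wv ⬝ᵥ (Wa *ᵥ wv) := by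
    intro x wv
    set z : Fin n → ℝ := A *ᵥ x + Bc *ᵥ wv with hz
    have h0 := hLMI.dotProduct_mulVec_nonneg (Sum.elim (Sum.elim x (-z)) wv)
    set TR : Matrix (Fin n ⊕ Fin n) ((i : Fin N) × Fin (p i)) ℝ :=
      Matrix.of fun i j => Sum.elim (fun _ => (0:ℝ)) (fun i' => (P * Bc) i' j) i with hTR
    set BL : Matrix ((i : Fin N) × Fin (p i)) (Fin n ⊕ Fin n) ℝ :=
      Matrix.of fun i j => Sum.elim (fun _ => (0:ℝ)) (fun j' => (Bcᵀ * P) i j') j with hBL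
    have hTRmv : TR *ᵥ wv = Sum.elim (fun _ => (0:ℝ)) ((P * Bc) *ᵥ wv) := by
      funext i
      cases i with
      | inl i => simp [hTR, Matrix.mulVec, dotProduct]
      | inr i => simp [hTR, Matrix.mulVec, dotProduct]
    have hBLmv : BL *ᵥ (Sum.elim x (-z)) = (Bcᵀ * P) *ᵥ (-z) := by
      funext c
      simp [hBL, Matrix.mulVec, dotProduct, Fintype.sum_sum_type, mul_comm]
    rw [show (star (Sum.elim (Sum.elim x (-z)) wv)) = Sum.elim (Sum.elim x (-z)) wv by
      simp] at h0
    rw [Matrix.fromBlocks_mulVec] at h0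
    simp only [Sum.elim_comp_inl, Sum.elim_comp_inr] at h0
    rw [Matrix.fromBlocks_mulVec] at h0
    simp only [Sum.elim_comp_inl, Sum.elim_comp_inr] at h0
    rw [hTRmv, hBLmv] at h0
    simp only [Sum.elim_add_add, sumElim_dotProduct_sumElim] at h0
    -- now massage the dot products
    have e1 : ∀ u v : Fin n → ℝ, u ⬝ᵥ ((Aᵀ * P) *ᵥ v) = (A *ᵥ u) ⬝ᵥ (P *ᵥ v) := by
      intro u v
      rw [← Matrix.mulVec_mulVec, Matrix.dotProduct_mulVec, ← Matrix.mulVec_transpose,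
        Matrix.transpose_transpose, Matrix.dotProduct_mulVec]
    have e2 : ∀ u v : Fin n → ℝ, u ⬝ᵥ ((P * A) *ᵥ v) = u ⬝ᵥ (P *ᵥ (A *ᵥ v)) := by
      intro u v; rw [← Matrix.mulVec_mulVec]
    have e3 : ∀ (u : ((i : Fin N) × Fin (p i)) → ℝ) (v : Fin n → ℝ),
        u ⬝ᵥ ((Bcᵀ * P) *ᵥ v) = (Bc *ᵥ u) ⬝ᵥ (P *ᵥ v) := by
      intro u v
      rw [← Matrix.mulVec_mulVec, Matrix.dotProduct_mulVec, ← Matrix.mulVec_transpose,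
        Matrix.transpose_transpose, Matrix.dotProduct_mulVec]
    have e4 : ∀ u v : Fin n → ℝ, u ⬝ᵥ (P *ᵥ v) = v ⬝ᵥ (P *ᵥ u) := by
      intro u v
      rw [Matrix.dotProduct_mulVec, ← Matrix.mulVec_transpose, hPT,
        dotProduct_comm]
    have e5 : ∀ v : Fin n → ℝ, v ⬝ᵥ ((P * Bc) *ᵥ wv) = (Bc *ᵥ wv) ⬝ᵥ (P *ᵥ v) := by
      intro v
      rw [← Matrix.mulVec_mulVec, e4]
    simp only [dotProduct_add, add_dotProduct, Matrix.mulVec_neg,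
      dotProduct_neg, neg_dotProduct, Matrix.smul_mulVec,
      dotProduct_smul, smul_eq_mul, Sum.elim_add_add,
      sumElim_dotProduct_sumElim, e1, e2, e3, e5, Pi.add_apply] at h0
    have hz1 : (A *ᵥ x) ⬝ᵥ (P *ᵥ z) + (Bc *ᵥ wv) ⬝ᵥ (P *ᵥ z) = z ⬝ᵥ (P *ᵥ z) := by
      rw [← add_dotProduct]
    have hz2 : z ⬝ᵥ (P *ᵥ (A *ᵥ x)) = (A *ᵥ x) ⬝ᵥ (P *ᵥ z) := e4 _ _
    have hz3 : z ⬝ᵥ (P *ᵥ (Bc *ᵥ wv)) = (Bc *ᵥ wv) ⬝ᵥ (P *ᵥ z) := by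
      rw [Matrix.mulVec_mulVec, e5]
    have hzero : (x ⬝ᵥ fun _ => (0:ℝ)) = 0 := by simp [dotProduct]
    rw [hz2, hzero] at h0
    linarith [h0, hz1]
  have hstep : ∀ k, ξ (k+1) ⬝ᵥ (P *ᵥ ξ (k+1)) ≤ a * (ξ k ⬝ᵥ (P *ᵥ ξ k)) + ((N:ℝ) - a) := by
    intro k
    have h1 := hkey (ξ k) (σ k)
    rw [hBcσ k, ← hdyn k] at h1
    have h2 : σ k ⬝ᵥ (Wa *ᵥ σ k) ≤ (N:ℝ) - a := by
      rw [hWaσ k]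
      have hle : ∑ i, (1 - aC i) * (ω k i ⬝ᵥ (W i *ᵥ ω k i)) ≤ ∑ i : Fin N, (1 - aC i) := by
        apply Finset.sum_le_sum
        intro i _
        have h3 := (haC i).2
        have h4 := hω k i
        have h5 := ((hW i).posSemidef.dotProduct_mulVec_nonneg (ω k i))
        simp only [RCLike.star_def, star_trivial] at h5
        nlinarith
      have heq : ∑ i : Fin N, (1 - aC i) = (N:ℝ) - ∑ i, aC i := by
        rw [Finset.sum_sub_distrib]
        simp
      linarith
    linarith
  intro k hk
  induction k, hk using Nat.le_induction with
  | base => simp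
  | succ k hk ih =>
    have hb := hstep k
    have hk1 : k - 1 + 1 = k := Nat.succ_pred_eq_of_pos hk
    have hpow : a ^ (k + 1 - 1) = a * a ^ (k - 1) := by
      rw [Nat.add_sub_cancel]
      conv_lhs => rw [← hk1]
      rw [pow_succ]
      ring
    have h1a : (0:ℝ) < 1 - a := by linarith
    calc ξ (k+1) ⬝ᵥ (P *ᵥ ξ (k+1)) ≤ a * (ξ k ⬝ᵥ (P *ᵥ ξ k)) + ((N:ℝ) - a) := hb
      _ ≤ a * (a ^ (k-1) * (ξ 1 ⬝ᵥ (P *ᵥ ξ 1))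
            + ((N:ℝ) - a) * (1 - a ^ (k-1)) / (1-a)) + ((N:ℝ) - a) := by nlinarith [ih]
      _ = a ^ (k+1-1) * (ξ 1 ⬝ᵥ (P *ᵥ ξ 1)) + ((N:ℝ) - a) * (1 - a ^ (k+1-1)) / (1-a) := by
        rw [hpow]
        field_simp
        ring
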